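/- Let G be a stably dissipative black-and-white graph, let i be a ∘-endpoint of G with unique neighbour i′, and let T_i(G) be the trimmed graph. If T_i(G) has constant rank, then G has constant rank and rank(G) = rank(T_i(G)); that is, if every dissipative matrix B with G_B = T_i(G) has rank r, then every dissipative matrix A with G_A = G has rank r. -/

import Mathlib

open Matrix

/-- A real `n × n` matrix `A` is dissipative if there is a positive diagonal
matrix `D = diag d` such that `xᵀ A D x ≤ 0` for all `x`. -/
def IsDissipative {n : ℕ} (A : Matrix (Fin n) (Fin n) ℝ) : Prop :=
  ∃ d : Fin n → ℝ, (∀ i, 0 < d i) ∧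
    ∀ x : Fin n → ℝ, ∑ i, ∑ j, x i * A i j * d j * x j ≤ 0

/-- The graph `G_A` of a matrix `A`: vertices `1, …, n`, with an edge between
`i ≠ j` iff `a_ij ≠ 0` or `a_ji ≠ 0`. -/
def graphOf {n : ℕ} (A : Matrix (Fin n) (Fin n) ℝ) : SimpleGraph (Fin n) where
  Adj i j := i ≠ j ∧ (A i j ≠ 0 ∨ A j i ≠ 0)
  symm := ⟨fun _ _ h => ⟨h.1.symm, h.2.symm⟩⟩
  loopless := ⟨fun _ h => h.1 rfl⟩

/-- A black-and-white graph is stably dissipative iff every cycle contains at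
least one edge joining two black vertices. -/
def IsStablyDissipativeGraph {V : Type*} (G : SimpleGraph V)
    (black : V → Prop) : Prop :=
  ∀ (v : V) (w : G.Walk v v), w.IsCycle →
    ∃ i j : V, s(i, j) ∈ w.edges ∧ black i ∧ black j

/-- The trimmed graph `T_i(G)`: remove from `G` every edge incident with `i'`
other than the edge `{i, i'}`. -/
def trimGraph {V : Type*} (G : SimpleGraph V) (i i' : V) : SimpleGraph V where
  Adj k l := G.Adj k l ∧ ((k ≠ i' ∧ l ≠ i') ∨ (k = i ∧ l = i') ∨ (k = i' ∧ l = i))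
  symm := by
    constructor
    intro k l h
    exact ⟨h.1.symm, by tauto⟩
  loopless := by
    constructor
    intro k h
    exact G.irrefl h.1

lemma aux_split {n : ℕ} (d : Fin n → ℝ) (M : Matrix (Fin n) (Fin n) ℝ)
    (z : Fin n → ℝ) (i' : Fin n) :
    (∑ k, ∑ l, z k * M k l * d l * z l) =
      (∑ k ∈ Finset.univ.erase i', ∑ l ∈ Finset.univ.erase i',
        z k * M k l * d l * z l)
      + ((∑ l ∈ Finset.univ.erase i', z i' * M i' l * d l * z l)
      + ((∑ k ∈ Finset.univ.erase i', z k * M k i' * d i' * z i')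
      + z i' * M i' i' * d i' * z i')) := by
  have h1 : ∀ k, (∑ l, z k * M k l * d l * z l)
      = (∑ l ∈ Finset.univ.erase i', z k * M k l * d l * z l)
        + z k * M k i' * d i' * z i' :=
    fun k => (Finset.sum_erase_add _ _ (Finset.mem_univ i')).symm
  rw [← Finset.sum_erase_add Finset.univ _ (Finset.mem_univ i'), h1 i']
  simp only [h1]
  rw [Finset.sum_add_distrib]
  ring

lemma aux_pair {n : ℕ} (M : Matrix (Fin n) (Fin n) ℝ) (d x : Fin n → ℝ)
    (i i' : Fin n) (hne : i ≠ i') (hx : ∀ k, k ≠ i → k ≠ i' → x k = 0) :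
    (∑ k, ∑ l, x k * M k l * d l * x l) =
      x i * M i i * d i * x i + x i * M i i' * d i' * x i'
      + x i' * M i' i * d i * x i + x i' * M i' i' * d i' * x i' := by
  have hzero : ∀ (f : Fin n → ℝ), (∀ l, l ≠ i → l ≠ i' → f l = 0) →
      (∑ l, f l) = f i + f i' := by
    intro f hf
    rw [← Finset.sum_subset (Finset.subset_univ ({i, i'} : Finset (Fin n)))
      (fun l _ hl => by
        simp only [Finset.mem_insert, Finset.mem_singleton, not_or] at hl
        exact hf l hl.1 hl.2), Finset.sum_pair hne]
  have inner : ∀ k, (∑ l, x k * M k l * d l * x l)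
      = x k * M k i * d i * x i + x k * M k i' * d i' * x i' := by
    intro k
    exact hzero _ (fun l h1 h2 => by rw [hx l h1 h2, mul_zero])
  simp only [inner]
  rw [hzero _ (fun k h1 h2 => by rw [hx k h1 h2]; ring)]
  ring

/-- Trimming lemma.  Let `G` be a stably dissipative black-and-white graph,
`i` a ∘-endpoint with unique neighbour `i'`, and `T_i(G)` the trimmed graph.
If `T_i(G)` has constant rank `r` (every dissipative matrix `B` with
`G_B = T_i(G)` has rank `r`), then so has `G`: every dissipative matrix `A`
with `G_A = G` has rank `r`. -/
theorem stmt14 {n : ℕ} (G : SimpleGraph (Fin n)) (black : Set (Fin n))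
    (hsd : IsStablyDissipativeGraph G (· ∈ black))
    (i i' : Fin n) (hwhite : i ∉ black) (hadj : G.Adj i i')
    (huniq : ∀ j, G.Adj i j → j = i') (r : ℕ)
    (hT : ∀ B : Matrix (Fin n) (Fin n) ℝ, IsDissipative B →
      graphOf B = trimGraph G i i' → (∀ k, B k k < 0 ↔ k ∈ black) →
      (∀ k, k ∉ black → B k k = 0) → B.rank = r) :
    ∀ A : Matrix (Fin n) (Fin n) ℝ, IsDissipative A → graphOf A = G →
      (∀ k, A k k < 0 ↔ k ∈ black) → (∀ k, k ∉ black → A k k = 0) →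
      A.rank = r := by
  rintro A ⟨d, hd, hdiss⟩ hGA hAb hAw
  have hne : i ≠ i' := hadj.ne
  have hAii : A i i = 0 := hAw i hwhite
  -- row and column i vanish off i'
  have hoff : ∀ l, l ≠ i → l ≠ i' → A i l = 0 ∧ A l i = 0 := by
    intro l h1 h2
    have hnadj : ¬ G.Adj i l := fun h => h2 (huniq l h)
    rw [← hGA] at hnadj
    simp only [graphOf, ne_eq, not_and, not_or, not_not] at hnadj
    exact hnadj (fun h => h1 h.symm)
  have hrowi : ∀ l, l ≠ i' → A i l = 0 := by
    intro l h
    by_cases hl : l = i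
    · rw [hl]; exact hAii
    · exact (hoff l hl h).1
  have hcoli : ∀ k, k ≠ i' → A k i = 0 := by
    intro k h
    by_cases hk : k = i
    · rw [hk]; exact hAii
    · exact (hoff k hk h).2
  -- the key linear relation
  have hc : A i i' * d i' + A i' i * d i = 0 := by
    have hlin : ∀ t : ℝ, t * (A i i' * d i' + A i' i * d i)
        + A i' i' * d i' ≤ 0 := by
      intro t
      set x : Fin n → ℝ := fun k => if k = i then t else if k = i' then 1 else 0
        with hxdef
      have hx : ∀ k, k ≠ i → k ≠ i' → x k = 0 := by
        intro k h1 h2; simp [hxdef, h1, h2]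
      have hxi : x i = t := by simp [hxdef]
      have hxi' : x i' = 1 := by simp [hxdef, hne.symm]
      have h0 := hdiss x
      rw [aux_pair A d x i i' hne hx, hxi, hxi', hAii] at h0
      nlinarith [h0]
    by_contra hcne
    have h1 := hlin ((1 - A i' i' * d i') / (A i i' * d i' + A i' i * d i))
    rw [div_mul_cancel₀ _ hcne] at h1
    linarith
  -- both off-diagonal entries at the edge are nonzero
  have hadj' : (graphOf A).Adj i i' := by rw [hGA]; exact hadj
  obtain ⟨-, hor⟩ := hadj'
  have hAii' : A i i' ≠ 0 := by
    intro h
    have : A i' i = 0 := by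
      have := hc
      rw [h, zero_mul, zero_add] at this
      exact (mul_eq_zero.mp this).resolve_right (ne_of_gt (hd i))
    tauto
  have hAi'i : A i' i ≠ 0 := by
    intro h
    have : A i i' = 0 := by
      have := hc
      rw [h, zero_mul, add_zero] at this
      exact (mul_eq_zero.mp this).resolve_right (ne_of_gt (hd i'))
    tauto
  -- define the trimmed matrix
  set u : Fin n → ℝ := fun k =>
    if k = i then 0 else if k = i' then 0 else A k i' / A i i' with hudef
  set v : Fin n → ℝ := fun l =>
    if l = i then 0 else if l = i' then 0 else A i' l / A i' i with hvdef
  have hui : u i = 0 := by simp [hudef]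
  have hui' : u i' = 0 := by simp [hudef, hne.symm]
  have hvi : v i = 0 := by simp [hvdef]
  have hvi' : v i' = 0 := by simp [hvdef, hne.symm]
  set B : Matrix (Fin n) (Fin n) ℝ :=
    Matrix.of (fun k l => A k l - u k * A i l - A k i * v l) with hBdef
  have hBapp : ∀ k l, B k l = A k l - u k * A i l - A k i * v l := fun k l => rfl
  -- entries of B
  have hBkl : ∀ k l, k ≠ i' → l ≠ i' → B k l = A k l := by
    intro k l hk hl
    rw [hBapp, hrowi l hl, hcoli k hk]; ring
  have hBki' : ∀ k, k ≠ i → k ≠ i' → B k i' = 0 := by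
    intro k h1 h2
    rw [hBapp, hcoli k h2, hvi']
    simp only [hudef]
    rw [if_neg h1, if_neg h2, div_mul_cancel₀ _ hAii']
    ring
  have hBi'l : ∀ l, l ≠ i → l ≠ i' → B i' l = 0 := by
    intro l h1 h2
    rw [hBapp, hrowi l h2, hui']
    simp only [hvdef]
    rw [if_neg h1, if_neg h2]
    field_simp
    ring
  have hBii' : B i i' = A i i' := by
    rw [hBapp, hui, hAii, hvi']; ring
  have hBi'i : B i' i = A i' i := by
    rw [hBapp, hui', hAii, hvi]; ring
  have hBi'i' : B i' i' = A i' i' := by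
    rw [hBapp, hui', hvi']; ring
  have hBdiag : ∀ k, B k k = A k k := by
    intro k
    by_cases hk : k = i'
    · rw [hk]; exact hBi'i'
    · exact hBkl k k hk hk
  -- B is dissipative with the same d
  have hAi'i'le : A i' i' ≤ 0 := by
    by_cases hb : i' ∈ black
    · exact le_of_lt ((hAb i').mpr hb)
    · exact le_of_eq (hAw i' hb)
  have hBdiss : IsDissipative B := by
    refine ⟨d, hd, fun x => ?_⟩
    set y : Fin n → ℝ := fun k => if k = i' then 0 else x k with hydef
    have hyi' : y i' = 0 := by simp [hydef]
    have hyA := hdiss y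
    rw [aux_split d B x i', aux_split d A y i'] at *
    have hmem : i ∈ Finset.univ.erase i' :=
      Finset.mem_erase.mpr ⟨hne, Finset.mem_univ i⟩
    have e1 : (∑ k ∈ Finset.univ.erase i', ∑ l ∈ Finset.univ.erase i',
        x k * B k l * d l * x l)
        = (∑ k ∈ Finset.univ.erase i', ∑ l ∈ Finset.univ.erase i',
        y k * A k l * d l * y l) := by
      refine Finset.sum_congr rfl (fun k hk => Finset.sum_congr rfl (fun l hl => ?_))
      have hk' := (Finset.mem_erase.mp hk).1
      have hl' := (Finset.mem_erase.mp hl).1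
      rw [hBkl k l hk' hl']
      simp [hydef, hk', hl']
    have e2 : (∑ l ∈ Finset.univ.erase i', x i' * B i' l * d l * x l)
        = x i' * B i' i * d i * x i := by
      refine Finset.sum_eq_single_of_mem i hmem (fun l hl hli => ?_)
      rw [hBi'l l hli (Finset.mem_erase.mp hl).1]; ring
    have e3 : (∑ k ∈ Finset.univ.erase i', x k * B k i' * d i' * x i')
        = x i * B i i' * d i' * x i' := by
      refine Finset.sum_eq_single_of_mem i hmem (fun k hk hki => ?_)
      rw [hBki' k hki (Finset.mem_erase.mp hk).1]; ring
    have e4 : (∑ l ∈ Finset.univ.erase i', y i' * A i' l * d l * y l) = 0 :=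
      Finset.sum_eq_zero (fun l _ => by rw [hyi']; ring)
    have e5 : (∑ k ∈ Finset.univ.erase i', y k * A k i' * d i' * y i') = 0 :=
      Finset.sum_eq_zero (fun k _ => by rw [hyi']; ring)
    rw [e4, e5, hyi'] at hyA
    rw [e1, e2, e3, hBi'i, hBii', hBi'i']
    have hcross : x i' * A i' i * d i * x i + x i * A i i' * d i' * x i' = 0 := by
      linear_combination (x i * x i') * hc
    nlinarith [hyA, mul_self_nonneg (x i'), hd i', hAi'i'le,
      mul_nonneg (mul_self_nonneg (x i')) (le_of_lt (hd i'))]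
  -- graph of B is the trimmed graph
  have hBgraph : graphOf B = trimGraph G i i' := by
    rw [← hGA]
    ext k l
    show (k ≠ l ∧ (B k l ≠ 0 ∨ B l k ≠ 0)) ↔
      ((k ≠ l ∧ (A k l ≠ 0 ∨ A l k ≠ 0)) ∧
        ((k ≠ i' ∧ l ≠ i') ∨ (k = i ∧ l = i') ∨ (k = i' ∧ l = i)))
    by_cases hk : k = i' <;> by_cases hl : l = i'
    · rw [hk, hl]
      constructor
      · rintro ⟨h, -⟩; exact absurd rfl h
      · rintro ⟨⟨h, -⟩, -⟩; exact absurd rfl h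
    · rw [hk]
      by_cases hli : l = i
      · rw [hli, hBi'i, hBii']
        constructor
        · intro h; exact ⟨h, Or.inr (Or.inr ⟨rfl, rfl⟩)⟩
        · rintro ⟨h, -⟩; exact h
      · rw [hBi'l l hli hl, hBki' l hli hl]
        constructor
        · rintro ⟨-, h | h⟩ <;> exact absurd rfl h
        · rintro ⟨-, ⟨h, -⟩ | ⟨-, h⟩ | ⟨-, h⟩⟩
          · exact absurd rfl h
          · exact absurd h hl
          · exact absurd h hli
    · rw [hl]
      by_cases hki : k = i
      · rw [hki, hBii', hBi'i]
        constructor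
        · intro h; exact ⟨h, Or.inr (Or.inl ⟨rfl, rfl⟩)⟩
        · rintro ⟨h, -⟩; exact h
      · rw [hBki' k hki hk, hBi'l k hki hk]
        constructor
        · rintro ⟨-, h | h⟩ <;> exact absurd rfl h
        · rintro ⟨-, ⟨-, h⟩ | ⟨h, -⟩ | ⟨h, -⟩⟩
          · exact absurd rfl h
          · exact absurd h hki
          · exact absurd h hk
    · rw [hBkl k l hk hl, hBkl l k hl hk]
      constructor
      · intro h; exact ⟨h, Or.inl ⟨hk, hl⟩⟩
      · rintro ⟨h, -⟩; exact h
  -- rank of B equals rank of A via elementary operations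
  set N : Matrix (Fin n) (Fin n) ℝ :=
    Matrix.of (fun k l => u k * (if l = i then (1:ℝ) else 0)) with hNdef
  set M : Matrix (Fin n) (Fin n) ℝ :=
    Matrix.of (fun k l => (if k = i then (1:ℝ) else 0) * v l) with hMdef
  have hNA : N * A = Matrix.of (fun k l => u k * A i l) := by
    ext k l
    simp only [Matrix.mul_apply, hNdef, Matrix.of_apply, ite_mul, mul_ite,
      one_mul, zero_mul, mul_zero, mul_one]
    rw [Finset.sum_ite_eq' Finset.univ i (fun a => u k * A a l)]
    simp
  have hAM : A * M = Matrix.of (fun k l => A k i * v l) := by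
    ext k l
    simp only [Matrix.mul_apply, hMdef, Matrix.of_apply, ite_mul, mul_ite,
      one_mul, zero_mul, mul_zero, mul_one]
    rw [Finset.sum_ite_eq' Finset.univ i (fun a => A k a * v l)]
    simp
  have hNAM : N * (A * M) = 0 := by
    rw [hAM]
    ext k l
    simp only [Matrix.mul_apply, Matrix.zero_apply]
    refine Finset.sum_eq_zero (fun a _ => ?_)
    by_cases ha : a = i
    · subst ha; simp [hNdef, hAii]
    · simp [hNdef, ha]
  have hNN : N * N = 0 := by
    ext k l
    simp only [Matrix.mul_apply, Matrix.zero_apply]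
    refine Finset.sum_eq_zero (fun a _ => ?_)
    by_cases ha : a = i
    · subst ha; simp [hNdef, hui]
    · simp [hNdef, ha]
  have hMM : M * M = 0 := by
    ext k l
    simp only [Matrix.mul_apply, Matrix.zero_apply]
    refine Finset.sum_eq_zero (fun a _ => ?_)
    by_cases ha : a = i
    · subst ha; simp [hMdef, hvi]
    · simp [hMdef, ha]
  have hPAQ : (1 - N) * A * (1 - M) = B := by
    have : (1 - N) * A * (1 - M)
        = A - N * A - (A * M - N * (A * M)) := by
      noncomm_ring
    rw [this, hNAM, hNA, hAM]
    ext k l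
    simp only [Matrix.sub_apply, Matrix.of_apply, Matrix.zero_apply, hBapp]
    ring
  have hPdet : IsUnit (1 - N).det := by
    apply Matrix.isUnit_det_of_left_inverse (B := 1 + N)
    have : (1 + N) * (1 - N) = 1 - N * N := by noncomm_ring
    rw [this, hNN, sub_zero]
  have hQdet : IsUnit (1 - M).det := by
    apply Matrix.isUnit_det_of_left_inverse (B := 1 + M)
    have : (1 + M) * (1 - M) = 1 - M * M := by noncomm_ring
    rw [this, hMM, sub_zero]
  have hrank : B.rank = A.rank := by
    rw [← hPAQ,
      Matrix.rank_mul_eq_left_of_isUnit_det (1 - M) ((1 - N) * A) hQdet,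
      Matrix.rank_mul_eq_right_of_isUnit_det (1 - N) A hPdet]
  rw [← hrank]
  exact hT B hBdiss hBgraph
    (fun k => by rw [hBdiag k]; exact hAb k)
    (fun k hk => by rw [hBdiag k]; exact hAw k hk)
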